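/- Let p be a prime, n ≥ 1, and E a Hausdorff topological vector space over ℚ_p with continuous addition and continuous scalar multiplication. Let a : ℕ^n → E and f : (ℤ_p)^n → E, and suppose that for every x ∈ (ℤ_p)^n the net of finite partial sums ∑_{ν ∈ Φ} C(x,ν)·a_ν (over finite subsets Φ ⊆ ℕ^n, directed by inclusion) converges to f(x). Then for every ν ∈ ℕ^n one has a_ν = ∑_{μ ≤ ν} (−1)^{|ν|−|μ|} C(ν,μ)·f(μ); in particular the family (a_ν) is uniquely determined by f. -/

import Mathlib

open Filter


/-- one-dimensional alternating binomial inversion identity, over ℤ -/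
lemma alt_choose_sum (l N : ℕ) :
    ∑ m ∈ Finset.Icc l N, ((-1 : ℤ) ^ (N - m) * ((N.choose m : ℤ) * (m.choose l))) =
      if l = N then 1 else 0 := by
  rcases le_or_gt l N with h | h
  · rw [← Finset.Ico_add_one_right_eq_Icc, Finset.sum_Ico_eq_sum_range]
    have hstep : ∀ j ∈ Finset.range (N + 1 - l),
        (-1 : ℤ) ^ (N - (l + j)) * ((N.choose (l + j) : ℤ) * ((l + j).choose l)) =
        ((N.choose l : ℤ)) * ((-1 : ℤ) ^ (N - l - j) * ((N - l).choose j : ℤ)) := by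
      intro j hj
      rw [Finset.mem_range] at hj
      have hj' : l + j ≤ N := by omega
      have := Nat.choose_mul (n := N) (k := l + j) (s := l) (Nat.le_add_right l j)
      have h2 : (l + j) - l = j := by omega
      rw [h2] at this
      have h3 : N - (l + j) = N - l - j := by omega
      have hc : ((N.choose (l + j)) : ℤ) * ((l + j).choose l : ℤ) =
          ((N.choose l) : ℤ) * (((N - l).choose j) : ℤ) := by exact_mod_cast this
      rw [h3, hc]
      ring
    rw [Finset.sum_congr rfl hstep, ← Finset.mul_sum]
    set M := N - l with hM
    have hr : N + 1 - l = M + 1 := by omega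
    rw [hr]
    have hrefl : ∑ j ∈ Finset.range (M + 1), (-1 : ℤ) ^ (M - j) * ((M.choose j) : ℤ) =
        ∑ j ∈ Finset.range (M + 1), (-1 : ℤ) ^ j * ((M.choose j) : ℤ) := by
      rw [← Finset.sum_range_reflect]
      refine Finset.sum_congr rfl fun j hj => ?_
      rw [Finset.mem_range] at hj
      have h1 : M - (M + 1 - 1 - j) = j := by omega
      have h2 : M.choose (M + 1 - 1 - j) = M.choose j := by
        rw [show M + 1 - 1 - j = M - j by omega, Nat.choose_symm (by omega)]
      rw [h1, h2]
    rw [hrefl, Int.alternating_sum_range_choose]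
    by_cases hMN : M = 0
    · have : l = N := by omega
      simp [this, hMN]
    · have : l ≠ N := by omega
      simp [this, hMN]
  · rw [Finset.Icc_eq_empty (by omega)]
    have : l ≠ N := by omega
    simp [this]

/-- **Uniqueness of Mahler coefficients** (Lemma `detmind`).
If `E` is a Hausdorff topological `ℚ_p`-vector space and the net of finite partial sums
`∑_{ν ∈ Φ} C(x,ν) • a_ν` converges to `f x` for every `x ∈ (ℤ_p)^n`, then the coefficients
are recovered from `f` by `a_ν = ∑_{μ ≤ ν} (−1)^{|ν|−|μ|} C(ν,μ) • f μ`. -/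
theorem mahler_coefficients_unique (p : ℕ) [Fact p.Prime] (n : ℕ) (hn : 1 ≤ n)
    (E : Type*) [AddCommGroup E] [Module ℚ_[p] E] [TopologicalSpace E]
    [ContinuousAdd E] [ContinuousSMul ℚ_[p] E] [T2Space E]
    (a : (Fin n → ℕ) → E) (f : (Fin n → ℤ_[p]) → E)
    (hf : ∀ x : Fin n → ℤ_[p],
      HasSum (fun ν : Fin n → ℕ =>
        (∏ i, ((Ring.choose (x i) (ν i) : ℤ_[p]) : ℚ_[p])) • a ν) (f x)) :
    ∀ ν : Fin n → ℕ,
      a ν = ∑ μ ∈ Finset.Iic ν,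
        ((-1 : ℚ_[p]) ^ ((∑ i, ν i) - (∑ i, μ i)) * ∏ i, ((ν i).choose (μ i) : ℚ_[p])) •
          f (fun i => ((μ i : ℤ_[p]))) := by
  -- Step 1: f at integer points is a finite sum
  have hfin : ∀ μ : Fin n → ℕ,
      f (fun i => ((μ i : ℤ_[p]))) =
        ∑ ν ∈ Finset.Iic μ, (∏ i, ((μ i).choose (ν i) : ℚ_[p])) • a ν := by
    intro μ
    have key : ∀ ν : Fin n → ℕ,
        (∏ i, ((Ring.choose ((μ i : ℤ_[p])) (ν i) : ℤ_[p]) : ℚ_[p])) • a ν =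
        (∏ i, ((μ i).choose (ν i) : ℚ_[p])) • a ν := by
      intro ν
      congr 1
      refine Finset.prod_congr rfl fun i _ => ?_
      rw [Ring.choose_natCast]
      push_cast
      ring
    have h2 : HasSum (fun ν : Fin n → ℕ => (∏ i, ((μ i).choose (ν i) : ℚ_[p])) • a ν)
        (f (fun i => ((μ i : ℤ_[p])))) := by
      have := hf (fun i => ((μ i : ℤ_[p])))
      simpa only [key] using this
    have h3 : HasSum (fun ν : Fin n → ℕ => (∏ i, ((μ i).choose (ν i) : ℚ_[p])) • a ν)
        (∑ ν ∈ Finset.Iic μ, (∏ i, ((μ i).choose (ν i) : ℚ_[p])) • a ν) := by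
      apply hasSum_sum_of_ne_finset_zero
      intro ν hν
      rw [Finset.mem_Iic] at hν
      have : ∃ i, ¬ ν i ≤ μ i := by
        by_contra hc
        push_neg at hc
        exact hν hc
      obtain ⟨i, hi⟩ := this
      have : ((μ i).choose (ν i) : ℚ_[p]) = 0 := by
        rw [Nat.choose_eq_zero_of_lt (by omega)]; norm_num
      rw [Finset.prod_eq_zero (Finset.mem_univ i) this, zero_smul]
    exact h2.unique h3
  intro ν
  symm
  calc ∑ μ ∈ Finset.Iic ν,
        ((-1 : ℚ_[p]) ^ ((∑ i, ν i) - (∑ i, μ i)) * ∏ i, ((ν i).choose (μ i) : ℚ_[p])) •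
          f (fun i => ((μ i : ℤ_[p])))
      = ∑ μ ∈ Finset.Iic ν, ∑ lam ∈ Finset.Iic μ,
          (((-1 : ℚ_[p]) ^ ((∑ i, ν i) - (∑ i, μ i)) * ∏ i, ((ν i).choose (μ i) : ℚ_[p])) *
            (∏ i, ((μ i).choose (lam i) : ℚ_[p]))) • a lam := by
        refine Finset.sum_congr rfl fun μ _ => ?_
        rw [hfin μ, Finset.smul_sum]
        exact Finset.sum_congr rfl fun lam _ => by rw [smul_smul]
    _ = ∑ lam ∈ Finset.Iic ν, ∑ μ ∈ Finset.Icc lam ν,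
          (((-1 : ℚ_[p]) ^ ((∑ i, ν i) - (∑ i, μ i)) * ∏ i, ((ν i).choose (μ i) : ℚ_[p])) *
            (∏ i, ((μ i).choose (lam i) : ℚ_[p]))) • a lam := by
        rw [Finset.sum_sigma', Finset.sum_sigma']
        refine Finset.sum_nbij' (fun x => ⟨x.2, x.1⟩) (fun x => ⟨x.2, x.1⟩) ?_ ?_ ?_ ?_ ?_
        · rintro ⟨μ, lam⟩ h
          simp only [Finset.mem_sigma, Finset.mem_Iic, Finset.mem_Icc] at *
          exact ⟨le_trans h.2 h.1, h.2, h.1⟩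
        · rintro ⟨lam, μ⟩ h
          simp only [Finset.mem_sigma, Finset.mem_Iic, Finset.mem_Icc] at *
          exact ⟨h.2.2, h.2.1⟩
        · rintro ⟨μ, lam⟩ _; rfl
        · rintro ⟨lam, μ⟩ _; rfl
        · rintro ⟨μ, lam⟩ _; rfl
    _ = ∑ lam ∈ Finset.Iic ν, (if lam = ν then (1:ℚ_[p]) else 0) • a lam := by
        refine Finset.sum_congr rfl fun lam hlam => ?_
        rw [Finset.mem_Iic] at hlam
        rw [← Finset.sum_smul]
        congr 1
        -- inner scalar sum
        have hterm : ∀ μ ∈ Finset.Icc lam ν,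
            ((-1 : ℚ_[p]) ^ ((∑ i, ν i) - (∑ i, μ i)) * ∏ i, ((ν i).choose (μ i) : ℚ_[p])) *
              (∏ i, ((μ i).choose (lam i) : ℚ_[p])) =
            ∏ i, ((-1 : ℚ_[p]) ^ (ν i - μ i) *
              (((ν i).choose (μ i) : ℚ_[p]) * ((μ i).choose (lam i) : ℚ_[p]))) := by
          intro μ hμ
          rw [Finset.mem_Icc] at hμ
          have hsub : (∑ i, ν i) - (∑ i, μ i) = ∑ i, (ν i - μ i) :=
            (Finset.sum_tsub_distrib Finset.univ (fun i _ => hμ.2 i)).symm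
          rw [hsub, ← Finset.prod_pow_eq_pow_sum, Finset.prod_mul_distrib,
            Finset.prod_mul_distrib]
          ring
        rw [Finset.sum_congr rfl hterm]
        rw [show Finset.Icc lam ν = Fintype.piFinset fun i => Finset.Icc (lam i) (ν i) from
          Pi.Icc_eq lam ν]
        rw [← Finset.prod_univ_sum (t := fun i => Finset.Icc (lam i) (ν i))
          (f := fun i m => (-1 : ℚ_[p]) ^ (ν i - m) *
            (((ν i).choose m : ℚ_[p]) * ((m.choose (lam i)) : ℚ_[p])))]
        have hone : ∀ i : Fin n,
            (∑ m ∈ Finset.Icc (lam i) (ν i), (-1 : ℚ_[p]) ^ (ν i - m) *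
              (((ν i).choose m : ℚ_[p]) * ((m.choose (lam i)) : ℚ_[p]))) =
            if lam i = ν i then 1 else 0 := by
          intro i
          have := alt_choose_sum (lam i) (ν i)
          have hcast := congrArg (fun z : ℤ => (z : ℚ_[p])) this
          push_cast at hcast
          convert hcast using 2
        rw [Finset.prod_congr rfl fun i _ => hone i]
        by_cases h : lam = ν
        · simp [h]
        · have : ∃ i, lam i ≠ ν i := by
            by_contra hc; push_neg at hc; exact h (funext hc)
          obtain ⟨i, hi⟩ := this
          rw [Finset.prod_eq_zero (Finset.mem_univ i) (by simp [hi]), if_neg h]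
    _ = a ν := by
        simp only [ite_smul, one_smul, zero_smul]
        rw [Finset.sum_ite_eq' (Finset.Iic ν) ν a]
        simp
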